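/- Let $P$ and $Q$ be complex polynomials of the same degree $k\ge 1$, let $D=\{z:|z|<R\}$ contain all roots $z_1,\dots,z_k$ of $P$ (listed with multiplicity), and let $y$ be analytic on $D$ with $P(z)=Q(y(z))$ for all $z\in D$. If every root of $Q$ lies in $y(D)$, then for all $i$, $y'(z_i)\ne 0$, and for all $i,j$: $y(z_i)=y(z_j)$ if and only if $z_i=z_j$. -/

import Mathlib

open Polynomial Filter

/-- Evaluation of a polynomial along an analytic function is analytic. -/
private lemma analyticAt_poly_comp (p : Polynomial ℂ) {f : ℂ → ℂ} {ζ : ℂ}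
    (hf : AnalyticAt ℂ f ζ) : AnalyticAt ℂ (fun w => p.eval (f w)) ζ := by
  have := hf.aeval_polynomial p
  simpa [Polynomial.aeval_def, Polynomial.eval_map] using this

/-- Uniqueness of the order of vanishing. -/
private lemma order_unique {f h1 h2 : ℂ → ℂ} {ζ : ℂ} {m n : ℕ}
    (hh1 : AnalyticAt ℂ h1 ζ) (hh2 : AnalyticAt ℂ h2 ζ)
    (h1ne : h1 ζ ≠ 0) (h2ne : h2 ζ ≠ 0)
    (e1 : ∀ᶠ w in nhds ζ, f w = (w - ζ) ^ m * h1 w)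
    (e2 : ∀ᶠ w in nhds ζ, f w = (w - ζ) ^ n * h2 w) : m = n := by
  have hf : AnalyticAt ℂ f ζ :=
    ((((analyticAt_id).sub analyticAt_const).pow m).mul hh1).congr
      (Filter.EventuallyEq.symm (e1 : f =ᶠ[nhds ζ] fun w => (w - ζ) ^ m * h1 w))
  have o1 : analyticOrderAt f ζ = (m : ℕ∞) :=
    (hf.analyticOrderAt_eq_natCast).mpr ⟨h1, hh1, h1ne, by simpa [smul_eq_mul] using e1⟩
  have o2 : analyticOrderAt f ζ = (n : ℕ∞) :=
    (hf.analyticOrderAt_eq_natCast).mpr ⟨h2, hh2, h2ne, by simpa [smul_eq_mul] using e2⟩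
  exact_mod_cast o1 ▸ o2

/-- Local factorization of an analytic function with an isolated zero. -/
private lemma exists_order {g : ℂ → ℂ} {ζ : ℂ} (hg : AnalyticAt ℂ g ζ) (h0 : g ζ = 0)
    (hnc : ¬ ∀ᶠ w in nhds ζ, g w = 0) :
    ∃ (ν : ℕ) (u : ℂ → ℂ), 1 ≤ ν ∧ AnalyticAt ℂ u ζ ∧ u ζ ≠ 0 ∧
      ∀ᶠ w in nhds ζ, g w = (w - ζ) ^ ν * u w := by
  have hne : analyticOrderAt g ζ ≠ ⊤ := fun h => hnc (analyticOrderAt_eq_top.mp h)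
  obtain ⟨ν, hν⟩ := WithTop.ne_top_iff_exists.mp hne
  obtain ⟨u, hu, hune, hrep⟩ := (hg.analyticOrderAt_eq_natCast (n := ν)).mp hν.symm
  have hrep' : ∀ᶠ w in nhds ζ, g w = (w - ζ) ^ ν * u w := by
    simpa [smul_eq_mul] using hrep
  refine ⟨ν, u, ?_, hu, hune, hrep'⟩
  rcases Nat.eq_zero_or_pos ν with h | h
  · exfalso
    have := hrep'.self_of_nhds
    rw [h, pow_zero, one_mul, h0] at this
    exact hune this.symm
  · exact h

private lemma ball_infinite {R : ℝ} (hR : 0 < R) : (Metric.ball (0 : ℂ) R).Infinite := by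
  apply Set.infinite_of_injective_forall_mem
    (f := fun n : ℕ => ((R / 2 ^ (n + 1) : ℝ) : ℂ))
  · intro a b hab
    simp only [Complex.ofReal_inj] at hab
    have hab' : (R / 2 ^ (a + 1) : ℝ) = (R / 2 ^ (b + 1) : ℝ) := by exact_mod_cast hab
    have h2 : StrictAnti (fun n : ℕ => (R / 2 ^ (n + 1) : ℝ)) := fun x x' hx =>
      div_lt_div_of_pos_left hR (by positivity)
        (pow_lt_pow_right₀ one_lt_two (by omega))
    exact h2.injective hab'
  · intro n
    simp only [Metric.mem_ball, dist_zero_right, Complex.norm_real, Real.norm_eq_abs]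
    rw [abs_of_pos (by positivity)]
    exact div_lt_self hR (one_lt_pow₀ one_lt_two (Nat.succ_ne_zero n))

/-- Theorem A, forward direction: if every root of `Q` lies in `y(D)`, then
`y'(zᵢ) ≠ 0` for all `i` and `y(zᵢ) = y(zⱼ) ↔ zᵢ = zⱼ`. -/
theorem thmA_forward (R : ℝ) (hR : 0 < R) (k : ℕ) (hk : 1 ≤ k)
    (P Q : Polynomial ℂ) (hPdeg : P.natDegree = k) (hQdeg : Q.natDegree = k)
    (z : Fin k → ℂ) (hz : ∀ i, z i ∈ Metric.ball (0 : ℂ) R)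
    (hPfact : P = Polynomial.C P.leadingCoeff *
      ∏ i, (Polynomial.X - Polynomial.C (z i)))
    (y : ℂ → ℂ) (hy : DifferentiableOn ℂ y (Metric.ball (0 : ℂ) R))
    (heq : ∀ w ∈ Metric.ball (0 : ℂ) R, P.eval w = Q.eval (y w))
    (hroots : ∀ w : ℂ, Q.eval w = 0 → w ∈ y '' Metric.ball (0 : ℂ) R) :
    (∀ i, deriv y (z i) ≠ 0) ∧ (∀ i j, y (z i) = y (z j) ↔ z i = z j) := by
  classical
  set D := Metric.ball (0 : ℂ) R with hD
  have hDopen : IsOpen D := Metric.isOpen_ball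
  have hP0 : P ≠ 0 := by
    intro h; rw [h] at hPdeg; simp at hPdeg; omega
  have hQ0 : Q ≠ 0 := by
    intro h; rw [h] at hQdeg; simp at hQdeg; omega
  have hc : P.leadingCoeff ≠ 0 := leadingCoeff_ne_zero.mpr hP0
  have hyA : ∀ ζ ∈ D, AnalyticAt ℂ y ζ := fun ζ hζ => hy.analyticAt (hDopen.mem_nhds hζ)
  -- roots of P
  have hPr : P.roots = Finset.univ.val.map z := by
    rw [hPfact, Polynomial.roots_C_mul _ hc]
    have h1 : (∏ i, (X - C (z i)))
        = ((Finset.univ.val.map z).map fun a => X - C a).prod := by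
      rw [Multiset.map_map]; rfl
    rw [h1, roots_multiset_prod_X_sub_C]
  have hPz : ∀ i, P.eval (z i) = 0 := by
    intro i
    rw [hPfact]
    simp only [eval_mul, eval_C, eval_prod, eval_sub, eval_X]
    rw [Finset.prod_eq_zero (Finset.mem_univ i) (by ring)]
    ring
  have hQyz : ∀ i, Q.eval (y (z i)) = 0 := fun i => (heq (z i) (hz i)) ▸ hPz i
  -- y is not locally constant on D
  have hnc : ∀ ζ ∈ D, ¬ ∀ᶠ w in nhds ζ, y w - y ζ = 0 := by
    intro ζ hζ hev
    have hev' : y =ᶠ[nhds ζ] fun _ => y ζ := by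
      filter_upwards [hev] with w hw
      exact sub_eq_zero.mp hw
    have hconst : Set.EqOn y (fun _ => y ζ) D :=
      AnalyticOnNhd.eqOn_of_preconnected_of_eventuallyEq
        (hy.analyticOnNhd hDopen) (fun x _ => analyticAt_const)
        (convex_ball (0 : ℂ) R).isPreconnected hζ hev'
    have hPC : P - C (Q.eval (y ζ)) = 0 := by
      apply Polynomial.eq_zero_of_infinite_isRoot
      apply Set.Infinite.mono _ (ball_infinite hR)
      intro w hw
      simp only [Set.mem_setOf_eq, IsRoot, eval_sub, eval_C, sub_eq_zero]
      rw [heq w hw, hconst hw]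
    have : P = C (Q.eval (y ζ)) := by linear_combination (norm := ring_nf) hPC
    rw [this] at hPdeg
    simp at hPdeg; omega
  -- key local multiplicity identity
  have key : ∀ i : Fin k, ∃ (ν : ℕ) (u : ℂ → ℂ), 1 ≤ ν ∧ AnalyticAt ℂ u (z i) ∧
      u (z i) ≠ 0 ∧ (∀ᶠ w in nhds (z i), y w - y (z i) = (w - z i) ^ ν * u w) ∧
      P.rootMultiplicity (z i) = Q.rootMultiplicity (y (z i)) * ν := by
    intro i
    set ζ := z i
    have hζD : ζ ∈ D := hz i
    have hyA' := hyA ζ hζD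
    have hgA : AnalyticAt ℂ (fun w => y w - y ζ) ζ := by
      exact hyA'.sub analyticAt_const
    obtain ⟨ν, u, hν1, huA, hune, hurep⟩ :=
      exists_order hgA (by simp) (hnc ζ hζD)
    refine ⟨ν, u, hν1, huA, hune, hurep, ?_⟩
    -- factorizations of P and Q
    set m := P.rootMultiplicity ζ with hm
    set μ := Q.rootMultiplicity (y ζ) with hμ
    set P1 := P /ₘ (X - C ζ) ^ m with hP1
    set Q1 := Q /ₘ (X - C (y ζ)) ^ μ with hQ1
    have hPfac : (X - C ζ) ^ m * P1 = P := P.pow_mul_divByMonic_rootMultiplicity_eq ζ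
    have hQfac : (X - C (y ζ)) ^ μ * Q1 = Q := Q.pow_mul_divByMonic_rootMultiplicity_eq (y ζ)
    have hP1ne : P1.eval ζ ≠ 0 := eval_divByMonic_pow_rootMultiplicity_ne_zero ζ hP0
    have hQ1ne : Q1.eval (y ζ) ≠ 0 := eval_divByMonic_pow_rootMultiplicity_ne_zero (y ζ) hQ0
    -- two local representations of w ↦ P.eval w near ζ
    have e1 : ∀ᶠ w in nhds ζ, P.eval w = (w - ζ) ^ m * P1.eval w := by
      filter_upwards with w
      conv_lhs => rw [← hPfac]
      simp
    have e2 : ∀ᶠ w in nhds ζ, P.eval w = (w - ζ) ^ (μ * ν) *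
        (u w ^ μ * Q1.eval (y w)) := by
      have hmem : ∀ᶠ w in nhds ζ, w ∈ D := hDopen.eventually_mem hζD
      filter_upwards [hmem, hurep] with w hw hwrep
      rw [heq w hw]
      conv_lhs => rw [← hQfac]
      simp only [eval_mul, eval_pow, eval_sub, eval_X, eval_C]
      rw [hwrep]
      ring
    have : m = μ * ν := by
      refine order_unique (analyticAt_poly_comp P1 analyticAt_id) ?_ hP1ne ?_ e1 e2
      · exact (huA.pow μ).mul (analyticAt_poly_comp Q1 hyA')
      · simp only [ne_eq, mul_eq_zero, pow_eq_zero_iff', not_or, not_and_or]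
        exact ⟨Or.inl hune, hQ1ne⟩
    exact this
  choose ν u hν1 huA hune hurep hmult using key
  -- multiplicities
  set μ : ℂ → ℕ := fun w => Q.rootMultiplicity w with hμdef
  have hμpos : ∀ i, 0 < μ (y (z i)) := fun i =>
    (Q.rootMultiplicity_pos hQ0).mpr (hQyz i)
  -- ν is determined by the point z i
  set N : ℂ → ℕ := fun ζ => P.rootMultiplicity ζ / μ (y ζ) with hNdef
  have hNν : ∀ i, N (z i) = ν i := by
    intro i
    simp only [hNdef]
    rw [hmult i, Nat.mul_div_cancel_left _ (hμpos i)]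
  -- the finset of distinct roots of P
  set T : Finset ℂ := Finset.univ.image z with hT
  have hmemT : ∀ ζ ∈ T, ∃ i, z i = ζ := by
    intro ζ hζ
    obtain ⟨i, _, hi⟩ := Finset.mem_image.mp hζ
    exact ⟨i, hi⟩
  -- sum of multiplicities of P over T equals k
  have hcard : (Finset.univ.val.map z).card = k := by simp
  have hTfin : (Finset.univ.val.map z).toFinset = T := by
    rw [Multiset.toFinset_map, Finset.val_toFinset]
  have S1 : ∑ ζ ∈ T, P.rootMultiplicity ζ = k := by
    have := Multiset.toFinset_sum_count_eq (Finset.univ.val.map z)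
    rw [hcard, hTfin] at this
    rw [← this]
    apply Finset.sum_congr rfl
    intro ζ _
    rw [← Polynomial.count_roots, hPr]
  -- roots of Q are exactly the images y (z i)
  have hQroots : Q.roots.toFinset = T.image y := by
    ext w
    simp only [Multiset.mem_toFinset, Polynomial.mem_roots hQ0, IsRoot]
    constructor
    · intro hw
      obtain ⟨ζ, hζD, hζw⟩ := hroots w hw
      have hPζ : P.eval ζ = 0 := by rw [heq ζ hζD, hζw, hw]
      have : ζ ∈ P.roots := (Polynomial.mem_roots hP0).mpr hPζ
      rw [hPr, Multiset.mem_map] at this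
      obtain ⟨i, _, hi⟩ := this
      refine Finset.mem_image.mpr ⟨z i, Finset.mem_image.mpr ⟨i, Finset.mem_univ i, rfl⟩, ?_⟩
      rw [hi]; exact hζw
    · intro hw
      obtain ⟨ζ, hζT, hζw⟩ := Finset.mem_image.mp hw
      obtain ⟨i, hi⟩ := hmemT ζ hζT
      rw [← hζw, ← hi]
      exact hQyz i
  have S2 : ∑ w ∈ T.image y, μ w = k := by
    have hsplit : Q.roots.card = k := by
      rw [← hQdeg]
      exact (Polynomial.splits_iff_card_roots.mp (IsAlgClosed.splits Q))
    have := Multiset.toFinset_sum_count_eq Q.roots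
    rw [hsplit, hQroots] at this
    rw [← this]
    apply Finset.sum_congr rfl
    intro w _
    rw [Polynomial.count_roots]
  -- positivity of μ on the image
  have hμposT : ∀ w ∈ T.image y, 0 < μ w := by
    intro w hw
    obtain ⟨ζ, hζT, hζw⟩ := Finset.mem_image.mp hw
    obtain ⟨i, hi⟩ := hmemT ζ hζT
    rw [← hζw, ← hi]
    exact hμpos i
  -- rewrite S1 in terms of μ and N
  have S1' : ∑ ζ ∈ T, μ (y ζ) * N ζ = k := by
    rw [← S1]
    apply Finset.sum_congr rfl
    intro ζ hζ
    obtain ⟨i, hi⟩ := hmemT ζ hζ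
    rw [← hi, hNν i, hmult i]
  -- the chain of inequalities
  have hle1 : ∀ ζ ∈ T, μ (y ζ) ≤ μ (y ζ) * N ζ := by
    intro ζ hζ
    obtain ⟨i, hi⟩ := hmemT ζ hζ
    have : 1 ≤ N ζ := by rw [← hi, hNν i]; exact hν1 i
    exact Nat.le_mul_of_pos_right _ this
  have hfiber : ∀ w ∈ T.image y, 1 ≤ (T.filter fun a => y a = w).card := by
    intro w hw
    obtain ⟨ζ, hζT, hζw⟩ := Finset.mem_image.mp hw
    refine Finset.card_pos.mpr ⟨ζ, Finset.mem_filter.mpr ⟨hζT, hζw⟩⟩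
  have hcomp : ∑ ζ ∈ T, μ (y ζ)
      = ∑ w ∈ T.image y, (T.filter fun a => y a = w).card • μ w :=
    Finset.sum_comp μ y
  have hle2 : ∀ w ∈ T.image y, μ w ≤ (T.filter fun a => y a = w).card • μ w := by
    intro w hw
    rw [smul_eq_mul]
    exact Nat.le_mul_of_pos_left _ (hfiber w hw)
  -- A := ∑ ζ ∈ T, μ (y ζ); show k ≤ A ≤ k
  have hA_le : ∑ ζ ∈ T, μ (y ζ) ≤ k := by
    rw [← S1']
    exact Finset.sum_le_sum hle1
  have hA_ge : k ≤ ∑ ζ ∈ T, μ (y ζ) := by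
    rw [hcomp, ← S2]
    exact Finset.sum_le_sum hle2
  have hA : ∑ ζ ∈ T, μ (y ζ) = k := le_antisymm hA_le hA_ge
  -- termwise equalities
  have heq1 : ∀ ζ ∈ T, μ (y ζ) = μ (y ζ) * N ζ := by
    have : ∑ ζ ∈ T, μ (y ζ) = ∑ ζ ∈ T, μ (y ζ) * N ζ := by rw [hA, S1']
    exact (Finset.sum_eq_sum_iff_of_le hle1).mp this
  have hN1 : ∀ i, N (z i) = 1 := by
    intro i
    have hT : z i ∈ T := Finset.mem_image.mpr ⟨i, Finset.mem_univ i, rfl⟩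
    have h := (heq1 (z i) hT).symm
    exact Nat.eq_of_mul_eq_mul_left (hμpos i) (h.trans (mul_one _).symm)
  have heq2 : ∀ w ∈ T.image y, μ w = (T.filter fun a => y a = w).card • μ w := by
    have : ∑ w ∈ T.image y, μ w
        = ∑ w ∈ T.image y, (T.filter fun a => y a = w).card • μ w := by
      rw [S2, ← hcomp, hA]
    exact (Finset.sum_eq_sum_iff_of_le hle2).mp this
  have hfib1 : ∀ w ∈ T.image y, (T.filter fun a => y a = w).card = 1 := by
    intro w hw
    have h := (heq2 w hw).symm
    rw [smul_eq_mul] at h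
    exact Nat.eq_of_mul_eq_mul_right (hμposT w hw) (h.trans (one_mul _).symm)
  constructor
  · -- derivative nonzero
    intro i
    have hνi : ν i = 1 := by rw [← hNν i]; exact hN1 i
    have hu' : HasDerivAt (u i) (deriv (u i) (z i)) (z i) :=
      ((huA i).differentiableAt).hasDerivAt
    have hprod : HasDerivAt (fun w => y (z i) + (w - z i) * u i w)
        (u i (z i)) (z i) := by
      have h1 : HasDerivAt (fun w : ℂ => w - z i) 1 (z i) :=
        (hasDerivAt_id (z i)).sub_const (z i)
      have := (h1.mul hu').const_add (y (z i))
      simpa using this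
    have hyd : HasDerivAt y (u i (z i)) (z i) := by
      apply hprod.congr_of_eventuallyEq
      filter_upwards [hurep i] with w hw
      rw [hνi, pow_one] at hw
      linear_combination hw
    rw [hyd.deriv]
    exact hune i
  · -- injectivity on roots
    intro i j
    constructor
    · intro hyij
      have hTi : z i ∈ T := Finset.mem_image.mpr ⟨i, Finset.mem_univ i, rfl⟩
      have hTj : z j ∈ T := Finset.mem_image.mpr ⟨j, Finset.mem_univ j, rfl⟩
      have hw : y (z i) ∈ T.image y := Finset.mem_image.mpr ⟨z i, hTi, rfl⟩
      have hcard1 := hfib1 (y (z i)) hw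
      have hmi : z i ∈ T.filter fun a => y a = y (z i) :=
        Finset.mem_filter.mpr ⟨hTi, rfl⟩
      have hmj : z j ∈ T.filter fun a => y a = y (z i) :=
        Finset.mem_filter.mpr ⟨hTj, hyij.symm⟩
      exact (Finset.card_le_one.mp (le_of_eq hcard1) _ hmi _ hmj).symm ▸ rfl
    · intro h; rw [h]
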